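/- Let k be an odd positive integer. Then liminf_{n→∞} f(n,k)/C(n,3) ≥ 1 − 4/(k+1)^2, where C(n,3) is the binomial coefficient. -/

import Mathlib

open Finset
open scoped Classical

/-- Edge set of the natural tight path `P^{(r)}_s` on vertex set `[s] = {1,…,s}`:
all intervals of `r` consecutive integers. -/
def pathEdges (r s : ℕ) : Finset (Finset ℕ) :=
  (Finset.Icc 1 (s - r + 1)).image (fun i => Finset.Icc i (i + r - 1))

/-- Edge set of the loose path `LP^{(r)}_s`: only the first and last edges. -/
def loosePathEdges (r s : ℕ) : Finset (Finset ℕ) :=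
  {Finset.Icc 1 r, Finset.Icc (s - r + 1) s}

/-- `C` is the edge set of a copy in `K^{(r)}_n` of the ordered hypergraph with
vertex set `[s]` and edge set `E`, i.e. the image of `E` under a strictly
increasing map `[s] → [n]`. -/
def IsCopy (n s : ℕ) (E : Finset (Finset ℕ)) (C : Finset (Finset ℕ)) : Prop :=
  ∃ f : ℕ → ℕ, StrictMonoOn f ↑(Finset.Icc 1 s) ∧
    (∀ v ∈ Finset.Icc 1 s, f v ∈ Finset.Icc 1 n) ∧
    C = E.image (fun e => e.image f)

/-- A transversal: a set `T` of `r`-element subsets of `[n]` meeting every copy. -/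
def IsTransversal (n r s : ℕ) (E : Finset (Finset ℕ)) (T : Finset (Finset ℕ)) : Prop :=
  T ⊆ (Finset.Icc 1 n).powersetCard r ∧
  ∀ C : Finset (Finset ℕ), IsCopy n s E C → ∃ e ∈ C, e ∈ T

/-- The transversal number `τ(n,H)`. -/
noncomputable def tau (n r s : ℕ) (E : Finset (Finset ℕ)) : ℕ :=
  sInf {m | ∃ T : Finset (Finset ℕ), IsTransversal n r s E T ∧ T.card = m}

/-- A packing: an edge-disjoint family of copies. -/
def IsPacking (n s : ℕ) (E : Finset (Finset ℕ)) (P : Finset (Finset (Finset ℕ))) : Prop :=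
  (∀ C ∈ P, IsCopy n s E C) ∧
  ∀ C ∈ P, ∀ C' ∈ P, C ≠ C' → Disjoint C C'

/-- The packing number `ν(n,H)`. -/
noncomputable def nu (n s : ℕ) (E : Finset (Finset ℕ)) : ℕ :=
  sSup {m | ∃ P : Finset (Finset (Finset ℕ)), IsPacking n s E P ∧ P.card = m}

/-- The ordered Turán number: maximum number of edges of a subgraph of
`K^{(r)}_n` containing no copy of the hypergraph with edge set `E`. -/
noncomputable def exNum (n r s : ℕ) (E : Finset (Finset ℕ)) : ℕ :=
  sSup {m | ∃ G ⊆ (Finset.Icc 1 n).powersetCard r,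
    (∀ C : Finset (Finset ℕ), IsCopy n s E C → ¬ C ⊆ G) ∧ G.card = m}

/-- `S ⊆ [n]` is `m`-left-biased. -/
def LeftBiased (n m : ℕ) (S : Finset ℕ) : Prop :=
  ∃ u ≤ n / 2, (S ∩ Finset.Icc 1 u).card = m ∧ S ∩ Finset.Icc (n + 1 - u) n = ∅

/-- `h(n,t,m)`: the number of `m`-left-biased `t`-element subsets of `[n]`. -/
noncomputable def hcount (n t m : ℕ) : ℕ :=
  (((Finset.Icc 1 n).powersetCard t).filter (LeftBiased n m)).card

/-- A fractional transversal. -/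
def IsFracTransversal (n r s : ℕ) (E : Finset (Finset ℕ)) (w : Finset ℕ → ℝ) : Prop :=
  (∀ e ∈ (Finset.Icc 1 n).powersetCard r, 0 ≤ w e) ∧
  ∀ C : Finset (Finset ℕ), IsCopy n s E C → 1 ≤ ∑ e ∈ C, w e

/-- The fractional transversal number `τ*(n,H)`. -/
noncomputable def tauStar (n r s : ℕ) (E : Finset (Finset ℕ)) : ℝ :=
  sInf {x : ℝ | ∃ w : Finset ℕ → ℝ, IsFracTransversal n r s E w ∧
    x = ∑ e ∈ (Finset.Icc 1 n).powersetCard r, w e}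

/-- A `k`-edge-labeling of the ordered complete graph on `[n]`. -/
def IsLabeling (n k : ℕ) (φ : ℕ → ℕ → ℕ) : Prop :=
  ∀ u v : ℕ, u ∈ Finset.Icc 1 n → v ∈ Finset.Icc 1 n → u < v → φ u v ∈ Finset.Icc 1 k

/-- The number of good triples `u < v < w` in `[n]` (those with `φ(uv) < φ(vw)`). -/
def goodCount (n : ℕ) (φ : ℕ → ℕ → ℕ) : ℕ :=
  (((Finset.Icc 1 n) ×ˢ (Finset.Icc 1 n) ×ˢ (Finset.Icc 1 n)).filter
    (fun p => p.1 < p.2.1 ∧ p.2.1 < p.2.2 ∧ φ p.1 p.2.1 < φ p.2.1 p.2.2)).card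

/-- The number of bad triples `u < v < w` in `[n]` (those with `φ(uv) ≥ φ(vw)`). -/
def badCount (n : ℕ) (φ : ℕ → ℕ → ℕ) : ℕ :=
  (((Finset.Icc 1 n) ×ˢ (Finset.Icc 1 n) ×ˢ (Finset.Icc 1 n)).filter
    (fun p => p.1 < p.2.1 ∧ p.2.1 < p.2.2 ∧ ¬ φ p.1 p.2.1 < φ p.2.1 p.2.2)).card

/-- `f(n,k)`: the maximum number of good triples over all `k`-edge-labelings of `[n]`. -/
noncomputable def fmax (n k : ℕ) : ℕ :=
  sSup {m | ∃ φ : ℕ → ℕ → ℕ, IsLabeling n k φ ∧ goodCount n φ = m}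

/-- A labeling is monotone if `φ(uv) ≤ φ(vw)` whenever `u < v < w` in `[n]`. -/
def IsMonotone (n : ℕ) (φ : ℕ → ℕ → ℕ) : Prop :=
  ∀ u v w : ℕ, u ∈ Finset.Icc 1 n → v ∈ Finset.Icc 1 n → w ∈ Finset.Icc 1 n →
    u < v → v < w → φ u v ≤ φ v w

/-- `Φ_L(v) = max{φ(uv) : u < v}`, with `Φ_L(1) = 0`. -/
def PhiL (φ : ℕ → ℕ → ℕ) (v : ℕ) : ℕ := (Finset.Ico 1 v).sup (fun u => φ u v)

/-- `Φ_R(v) = min{φ(vw) : v < w ≤ n}`, with `Φ_R(n) = k+1`. -/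
noncomputable def PhiR (n k : ℕ) (φ : ℕ → ℕ → ℕ) (v : ℕ) : ℕ :=
  if v = n then k + 1 else sInf {m | ∃ w ∈ Finset.Ioc v n, φ v w = m}

/-- `X_i = {v ∈ [n] : Φ_L(v) = i}`. -/
def XL (n : ℕ) (φ : ℕ → ℕ → ℕ) (i : ℕ) : Finset ℕ :=
  (Finset.Icc 1 n).filter (fun v => PhiL φ v = i)

/-- `X̂_i = {v ∈ [n] : Φ_R(v) = i}`. -/
noncomputable def XR (n k : ℕ) (φ : ℕ → ℕ → ℕ) (i : ℕ) : Finset ℕ :=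
  (Finset.Icc 1 n).filter (fun v => PhiR n k φ v = i)


section Aux

private lemma sum_sub_Ioc' (u b : ℕ) : (∑ v ∈ Finset.Ioc u b, (b - v)) = (b - u).choose 2 := by
  rw [Finset.sum_nbij' (i := fun v => b - v) (j := fun i => b - i) (t := Finset.range (b - u))
    (h := ?_) (hi := ?_) (hj := ?_) (left_neg := ?_) (right_neg := ?_)]
  · rw [Finset.sum_range_id, Nat.choose_two_right]
  all_goals intro x hx
  all_goals simp_all only [Finset.mem_Ioc, Finset.mem_range]
  all_goals omega

private lemma sum_choose2' (a b : ℕ) :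
    (∑ u ∈ Finset.Icc a b, (b - u).choose 2) = (b + 1 - a).choose 3 := by
  rcases le_or_gt a b with h | h
  · rw [Finset.sum_nbij' (i := fun u => b - u) (j := fun i => b - i) (t := Finset.Icc 0 (b - a))
      (h := ?_) (hi := ?_) (hj := ?_) (left_neg := ?_) (right_neg := ?_)]
    · have h2 : Finset.Icc 0 (b-a)
          = Finset.Icc 2 (b-a) ∪ (Finset.Icc 0 (b-a) \ Finset.Icc 2 (b-a)) := by
        rw [Finset.union_sdiff_of_subset]
        intro x hx; simp_all [Finset.mem_Icc]
      rw [h2, Finset.sum_union Finset.disjoint_sdiff, Nat.sum_Icc_choose]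
      have : ∑ i ∈ (Finset.Icc 0 (b-a) \ Finset.Icc 2 (b-a)), i.choose 2 = 0 := by
        apply Finset.sum_eq_zero
        intro i hi
        simp only [Finset.mem_sdiff, Finset.mem_Icc] at hi
        have : i = 0 ∨ i = 1 := by omega
        rcases this with rfl | rfl <;> simp
      rw [this, add_zero]
      congr 1
      omega
    all_goals intro x hx
    all_goals simp_all only [Finset.mem_Icc]
    all_goals omega
  · rw [Finset.Icc_eq_empty (by omega), Finset.sum_empty]
    have h2 : b + 1 - a = 0 := by omega
    rw [h2]
    simp

private lemma tcount' (a b : ℕ) :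
    ((Finset.Icc a b ×ˢ Finset.Icc a b ×ˢ Finset.Icc a b).filter
      (fun p => p.1 < p.2.1 ∧ p.2.1 < p.2.2)).card = (b + 1 - a).choose 3 := by
  rw [Finset.card_filter, Finset.sum_product]
  have step1 : ∀ u ∈ Finset.Icc a b,
      (∑ q ∈ Finset.Icc a b ×ˢ Finset.Icc a b,
        if u < q.1 ∧ q.1 < q.2 then 1 else 0) = (b - u).choose 2 := by
    intro u hu
    rw [Finset.sum_product]
    have step2 : ∀ v ∈ Finset.Icc a b,
        (∑ w ∈ Finset.Icc a b, if u < v ∧ v < w then (1:ℕ) else 0)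
          = if u < v then b - v else 0 := by
      intro v hv
      simp only [Finset.mem_Icc] at hv
      by_cases h : u < v
      · simp only [h, true_and, if_true]
        rw [← Finset.card_filter]
        have : (Finset.Icc a b).filter (fun w => v < w) = Finset.Ioc v b := by
          ext w; simp only [Finset.mem_filter, Finset.mem_Icc, Finset.mem_Ioc]; omega
        rw [this, Nat.card_Ioc]
      · simp [h]
    rw [Finset.sum_congr rfl step2, Finset.sum_ite, Finset.sum_const_zero, add_zero]
    have : (Finset.Icc a b).filter (fun v => u < v) = Finset.Ioc u b := by
      ext v; simp only [Finset.mem_filter, Finset.mem_Icc, Finset.mem_Ioc]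
      simp only [Finset.mem_Icc] at hu; omega
    rw [this, sum_sub_Ioc']
  rw [Finset.sum_congr rfl step1, sum_choose2']

/-- the block of `x`: `[n]` is split into `t` nearly equal intervals -/
private def blk (n t x : ℕ) : ℕ := (x - 1) * t / n + 1

private lemma blk_mem (n t : ℕ) (ht : 1 ≤ t) {x : ℕ} (hx : x ∈ Finset.Icc 1 n) :
    blk n t x ∈ Finset.Icc 1 t := by
  simp only [Finset.mem_Icc] at *
  have hn : 0 < n := by omega
  have : (x - 1) * t / n < t := by
    rw [Nat.div_lt_iff_lt_mul hn, mul_comm t n]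
    exact Nat.mul_lt_mul_of_pos_right (by omega) (by omega)
  exact ⟨Nat.le_add_left 1 _, Nat.succ_le_of_lt this⟩

private lemma blk_mono (n t : ℕ) {x y : ℕ} (h : x ≤ y) : blk n t x ≤ blk n t y := by
  unfold blk
  have := Nat.div_le_div_right (c := n) (Nat.mul_le_mul_right t (Nat.sub_le_sub_right h 1))
  omega

private lemma blk_diam (n t : ℕ) (ht : 1 ≤ t) (hn : 1 ≤ n) {x y : ℕ} (hx : 1 ≤ x) (hxy : x ≤ y)
    (h : blk n t x = blk n t y) : y - x ≤ n / t := by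
  unfold blk at h
  have h' : (x - 1) * t / n = (y - 1) * t / n := by omega
  have h1 : ((x - 1) * t / n) * n ≤ (x - 1) * t := Nat.div_mul_le_self _ _
  have h2 : (y - 1) * t < ((x - 1) * t / n) * n + n := by
    have h5 : (y - 1) * t / n < (x - 1) * t / n + 1 := by omega
    have := (Nat.div_lt_iff_lt_mul (by omega : 0 < n)).mp h5
    calc (y-1)*t < ((x-1)*t/n + 1) * n := this
      _ = ((x-1)*t/n)*n + n := by ring
  have h3 : (y - 1) * t = (y - x) * t + (x - 1) * t := by
    have : (y - 1) = (y - x) + (x - 1) := by omega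
    rw [this, add_mul]
  have key : (y - x) * t ≤ n := by omega
  exact (Nat.le_div_iff_mul_le (by omega : 0 < t)).mpr key

/-- the labeling realizing the lower bound -/
private noncomputable def phi0 (n t : ℕ) : ℕ → ℕ → ℕ :=
  fun u v => blk n t u + blk n t v - 1

private lemma phi0_labeling (n t : ℕ) (ht : 1 ≤ t) : IsLabeling n (2 * t - 1) (phi0 n t) := by
  intro u v hu hv _
  have h1 := blk_mem n t ht hu
  have h2 := blk_mem n t ht hv
  simp only [Finset.mem_Icc] at *
  unfold phi0
  omega

private lemma good_plus_bad (n : ℕ) (φ : ℕ → ℕ → ℕ) :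
    goodCount n φ + badCount n φ = n.choose 3 := by
  classical
  set s := (Finset.Icc 1 n) ×ˢ (Finset.Icc 1 n) ×ˢ (Finset.Icc 1 n) with hs
  have hg : goodCount n φ =
      ((s.filter (fun p => p.1 < p.2.1 ∧ p.2.1 < p.2.2)).filter
        (fun p => φ p.1 p.2.1 < φ p.2.1 p.2.2)).card := by
    rw [Finset.filter_filter]
    unfold goodCount
    congr 1
    apply Finset.filter_congr
    intro p _
    tauto
  have hb : badCount n φ =
      ((s.filter (fun p => p.1 < p.2.1 ∧ p.2.1 < p.2.2)).filter
        (fun p => ¬ φ p.1 p.2.1 < φ p.2.1 p.2.2)).card := by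
    rw [Finset.filter_filter]
    unfold badCount
    congr 1
    apply Finset.filter_congr
    intro p _
    tauto
  rw [hg, hb, Finset.card_filter_add_card_filter_not, hs, tcount']
  simp

private lemma bad_le (n t : ℕ) (ht : 1 ≤ t) :
    badCount n (phi0 n t) ≤ t * ((n / t + 1).choose 3) := by
  classical
  set s := (Finset.Icc 1 n) ×ˢ (Finset.Icc 1 n) ×ˢ (Finset.Icc 1 n) with hs
  set B := s.filter (fun p => p.1 < p.2.1 ∧ p.2.1 < p.2.2 ∧
      ¬ phi0 n t p.1 p.2.1 < phi0 n t p.2.1 p.2.2) with hB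
  have hmemB : ∀ p ∈ B, p.1 ∈ Finset.Icc 1 n ∧ p.2.1 ∈ Finset.Icc 1 n ∧ p.2.2 ∈ Finset.Icc 1 n ∧
      blk n t p.1 = blk n t p.2.1 ∧ blk n t p.2.1 = blk n t p.2.2 := by
    intro p hp
    rw [hB, Finset.mem_filter, hs] at hp
    obtain ⟨hps, h1, h2, h3⟩ := hp
    rw [Finset.mem_product, Finset.mem_product] at hps
    obtain ⟨q1, q2, q3⟩ := hps
    have pb : ∀ z, 1 ≤ blk n t z := fun z => Nat.le_add_left 1 _
    have m1 := blk_mono n t (le_of_lt h1)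
    have m2 := blk_mono n t (le_of_lt h2)
    have pb1 := pb p.1; have pb2 := pb p.2.1; have pb3 := pb p.2.2
    unfold phi0 at h3
    exact ⟨q1, q2, q3, by omega, by omega⟩
  have hfib : B.card = ∑ j ∈ Finset.Icc 1 t, (B.filter (fun p => blk n t p.1 = j)).card := by
    apply Finset.card_eq_sum_card_fiberwise
    intro p hp
    exact blk_mem n t ht (hmemB p hp).1
  have hbound : ∀ j ∈ Finset.Icc 1 t, (B.filter (fun p => blk n t p.1 = j)).card
      ≤ (n / t + 1).choose 3 := by
    intro j _
    rcases Finset.eq_empty_or_nonempty (B.filter (fun p => blk n t p.1 = j)) with he | hne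
    · simp [he]
    · obtain ⟨p0, hp0⟩ := hne
      have hp0B := Finset.mem_filter.mp hp0
      have hn : 1 ≤ n := by
        have := (hmemB p0 hp0B.1).1
        simp only [Finset.mem_Icc] at this; omega
      set S := (Finset.Icc 1 n).filter (fun x => blk n t x = j) with hS
      have hSne : S.Nonempty := ⟨p0.1, by
        rw [hS, Finset.mem_filter]
        exact ⟨(hmemB p0 hp0B.1).1, hp0B.2⟩⟩
      set m := S.min' hSne with hm
      have hmS : m ∈ S := S.min'_mem hSne
      have hSsub : ∀ x ∈ S, x ∈ Finset.Icc m (m + n / t) := by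
        intro x hx
        have h1 : m ≤ x := S.min'_le x hx
        rw [hS, Finset.mem_filter] at hx hmS
        have d := blk_diam n t ht hn (by
          simp only [Finset.mem_Icc] at hmS; exact hmS.1.1) h1 (by rw [hmS.2, hx.2])
        simp only [Finset.mem_Icc]
        omega
      have hsub : B.filter (fun p => blk n t p.1 = j) ⊆
          (Finset.Icc m (m + n/t) ×ˢ Finset.Icc m (m + n/t) ×ˢ Finset.Icc m (m + n/t)).filter
            (fun p => p.1 < p.2.1 ∧ p.2.1 < p.2.2) := by
        intro p hp
        rw [Finset.mem_filter] at hp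
        obtain ⟨hpB, hpj⟩ := hp
        obtain ⟨q1, q2, q3, e1, e2⟩ := hmemB p hpB
        rw [Finset.mem_filter, Finset.mem_product, Finset.mem_product]
        have hx1 : p.1 ∈ S := by rw [hS, Finset.mem_filter]; exact ⟨q1, hpj⟩
        have hx2 : p.2.1 ∈ S := by rw [hS, Finset.mem_filter]; exact ⟨q2, by omega⟩
        have hx3 : p.2.2 ∈ S := by rw [hS, Finset.mem_filter]; exact ⟨q3, by omega⟩
        refine ⟨⟨hSsub _ hx1, hSsub _ hx2, hSsub _ hx3⟩, ?_⟩
        rw [hB, Finset.mem_filter] at hpB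
        exact ⟨hpB.2.1, hpB.2.2.1⟩
      calc (B.filter (fun p => blk n t p.1 = j)).card ≤ _ := Finset.card_le_card hsub
        _ = (m + n/t + 1 - m).choose 3 := tcount' m (m + n/t)
        _ = (n/t + 1).choose 3 := by
            congr 1
            rw [add_assoc, Nat.add_sub_cancel_left]
  calc badCount n (phi0 n t) = B.card := rfl
    _ = ∑ j ∈ Finset.Icc 1 t, (B.filter (fun p => blk n t p.1 = j)).card := hfib
    _ ≤ ∑ j ∈ Finset.Icc 1 t, (n / t + 1).choose 3 := Finset.sum_le_sum hbound
    _ = t * ((n / t + 1).choose 3) := by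
        rw [Finset.sum_const, Nat.card_Icc]
        simp [mul_comm]

private lemma goodCount_le_fmax (n k : ℕ) (φ : ℕ → ℕ → ℕ) (h : IsLabeling n k φ) :
    goodCount n φ ≤ fmax n k := by
  apply le_csSup
  · refine ⟨(((Finset.Icc 1 n) ×ˢ (Finset.Icc 1 n) ×ˢ (Finset.Icc 1 n))).card, ?_⟩
    rintro m ⟨ψ, -, rfl⟩
    exact Finset.card_filter_le _ _
  · exact ⟨φ, h, rfl⟩

private lemma fmax_ge (n t : ℕ) (ht : 1 ≤ t) :
    n.choose 3 ≤ fmax n (2 * t - 1) + t * ((n / t + 1).choose 3) := by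
  calc n.choose 3 = goodCount n (phi0 n t) + badCount n (phi0 n t) :=
        (good_plus_bad n (phi0 n t)).symm
    _ ≤ fmax n (2*t-1) + t * ((n / t + 1).choose 3) :=
        Nat.add_le_add (goodCount_le_fmax n _ _ (phi0_labeling n t ht)) (bad_le n t ht)

private lemma fmax_le (n k : ℕ) (hk : 0 < k) : fmax n k ≤ n.choose 3 := by
  apply csSup_le
  · exact ⟨goodCount n (fun _ _ => 1), fun _ _ => 1, fun u v hu hv huv => by
      simp only [Finset.mem_Icc]; omega, rfl⟩
  · rintro m ⟨φ, -, rfl⟩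
    have := good_plus_bad n φ
    omega

private lemma six_choose_three (m : ℕ) : 6 * m.choose 3 = (m - 2) * ((m - 1) * m) := by
  have h := Nat.descFactorial_eq_factorial_mul_choose m 3
  simp [Nat.descFactorial, Nat.factorial] at h
  omega

private lemma six3_ub (m : ℕ) : 6 * m.choose 3 ≤ m ^ 3 := by
  rw [six_choose_three]
  calc (m-2)*((m-1)*m) ≤ m * (m * m) :=
        Nat.mul_le_mul (by omega) (Nat.mul_le_mul (by omega) le_rfl)
    _ = m^3 := by ring

private lemma six3_lb (m : ℕ) : (m - 2)^3 ≤ 6 * m.choose 3 := by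
  rw [six_choose_three]
  calc (m-2)^3 = (m-2)*((m-2)*(m-2)) := by ring
    _ ≤ (m-2)*((m-1)*m) := Nat.mul_le_mul le_rfl (Nat.mul_le_mul (by omega) (by omega))

private lemma ev_ineq (k t n : ℕ) (hkt : k = 2 * t - 1) (ht : 1 ≤ t) (hn : 3 ≤ n) :
    1 - (1/(t:ℝ)^2) * (((n:ℝ)+(t:ℝ))/((n:ℝ)-2))^3 ≤ (fmax n k : ℝ) / (n.choose 3 : ℝ) := by
  have hT1 : (1:ℝ) ≤ (t:ℝ) := by exact_mod_cast ht
  have hT0 : (0:ℝ) < (t:ℝ) := by linarith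
  have hN3 : (3:ℝ) ≤ (n:ℝ) := by exact_mod_cast hn
  have hA0 : (0:ℝ) < (n.choose 3 : ℝ) := by exact_mod_cast Nat.choose_pos hn
  have h1 : (n.choose 3 : ℝ) - (t:ℝ) * (((n/t+1 : ℕ).choose 3 : ℕ) : ℝ) ≤ (fmax n k : ℝ) := by
    have h := fmax_ge n t ht
    rw [← hkt] at h
    have h' : (n.choose 3 : ℝ) ≤ (fmax n k : ℝ) + (t : ℝ) * (((n/t+1 : ℕ).choose 3 : ℕ) : ℝ) := by
      exact_mod_cast h
    linarith
  have hB6 : 6 * (((n/t+1 : ℕ).choose 3 : ℕ) : ℝ) ≤ (((n/t+1 : ℕ) : ℝ))^3 := by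
    exact_mod_cast six3_ub (n/t+1)
  have hs_le : (((n/t+1 : ℕ)) : ℝ) ≤ ((n:ℝ) + (t:ℝ))/(t:ℝ) := by
    have h3 : ((n/t : ℕ) : ℝ) ≤ (n:ℝ) / (t:ℝ) := Nat.cast_div_le
    have h4 : ((n/t+1 : ℕ) : ℝ) = ((n/t : ℕ) : ℝ) + 1 := by push_cast; ring
    have h5 : (n:ℝ)/(t:ℝ) + 1 = ((n:ℝ) + (t:ℝ))/(t:ℝ) := by field_simp
    rw [h4, ← h5]
    linarith
  have hA6 : ((n:ℝ) - 2)^3 ≤ 6 * (n.choose 3 : ℝ) := by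
    have h5 : ((n-2:ℕ):ℝ) = (n:ℝ) - 2 := by
      push_cast [Nat.cast_sub (by omega : 2 ≤ n)]; ring
    calc ((n:ℝ)-2)^3 = (((n-2:ℕ):ℝ))^3 := by rw [h5]
      _ = (((n-2)^3 : ℕ) : ℝ) := by push_cast; ring
      _ ≤ ((6 * n.choose 3 : ℕ) : ℝ) := by exact_mod_cast six3_lb n
      _ = 6 * (n.choose 3 : ℝ) := by push_cast; ring
  set T := (t:ℝ)
  set N := (n:ℝ)
  set B := (((n/t+1 : ℕ).choose 3 : ℕ) : ℝ) with hBdef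
  set A := (n.choose 3 : ℝ) with hAdef
  set S := (((n/t+1 : ℕ)) : ℝ)
  have hkey : T * B / A ≤ (1/T^2) * ((N + T)/(N - 2))^3 := by
    rw [div_le_iff₀ hA0]
    have hNT0 : (0:ℝ) ≤ N + T := by linarith
    have hN20 : (0:ℝ) < N - 2 := by linarith
    have hs0 : (0:ℝ) ≤ S := by positivity
    have hs3 : S^3 ≤ ((N+T)/T)^3 := pow_le_pow_left₀ hs0 hs_le 3
    have hB0 : (0:ℝ) ≤ B := by positivity
    have e1 : 6 * T^3 * B ≤ (N+T)^3 := by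
      have e0 : T^3 * (6*B) ≤ T^3 * ((N+T)/T)^3 :=
        mul_le_mul_of_nonneg_left (le_trans hB6 hs3) (by positivity)
      calc 6 * T^3 * B = T^3 * (6*B) := by ring
        _ ≤ T^3 * ((N+T)/T)^3 := e0
        _ = (N+T)^3 := by field_simp
    have e2 : (1/T^2) * ((N+T)/(N-2))^3 * A = (N+T)^3 * A / (T^2 * (N-2)^3) := by
      field_simp
    rw [e2, le_div_iff₀ (by positivity)]
    calc T * B * (T^2 * (N-2)^3) = (T^3 * B) * (N-2)^3 := by ring
      _ ≤ (T^3 * B) * (6*A) := mul_le_mul_of_nonneg_left hA6 (by positivity)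
      _ = (6*T^3*B) * A := by ring
      _ ≤ (N+T)^3 * A := mul_le_mul_of_nonneg_right e1 (le_of_lt hA0)
  calc 1 - (1/T^2) * ((N+T)/(N-2))^3 ≤ 1 - T*B/A := by linarith
    _ = (A - T*B)/A := by field_simp
    _ ≤ (fmax n k : ℝ) / A := (div_le_div_iff_of_pos_right hA0).mpr h1

private lemma tendsto_base (T : ℝ) :
    Filter.Tendsto (fun n : ℕ => ((n:ℝ) + T) / ((n:ℝ) - 2)) Filter.atTop (nhds 1) := by
  have hden : Filter.Tendsto (fun n : ℕ => (n:ℝ) - 2) Filter.atTop Filter.atTop :=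
    Filter.tendsto_atTop_add_const_right _ _ tendsto_natCast_atTop_atTop
  have h0 : Filter.Tendsto (fun n : ℕ => (T + 2) / ((n:ℝ) - 2)) Filter.atTop (nhds 0) :=
    Filter.Tendsto.div_atTop tendsto_const_nhds hden
  have h1 : Filter.Tendsto (fun n : ℕ => 1 + (T + 2) / ((n:ℝ) - 2)) Filter.atTop (nhds 1) := by
    simpa using Filter.Tendsto.add tendsto_const_nhds h0
  apply h1.congr'
  filter_upwards [Filter.eventually_ge_atTop 3] with n hn
  have : (n:ℝ) - 2 ≠ 0 := by
    have : (3:ℝ) ≤ (n:ℝ) := by exact_mod_cast hn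
    nlinarith
  field_simp
  ring

private lemma tendsto_g (t : ℕ) (ht : 1 ≤ t) :
    Filter.Tendsto (fun n : ℕ => 1 - (1/(t:ℝ)^2) * (((n:ℝ)+(t:ℝ))/((n:ℝ)-2))^3) Filter.atTop
      (nhds (1 - 1/(t:ℝ)^2)) := by
  have h := (((tendsto_base (t:ℝ)).pow 3).const_mul (1/(t:ℝ)^2)).const_sub 1
  simpa using h

end Aux

/-- For odd positive `k`,
`liminf_{n→∞} f(n,k)/C(n,3) ≥ 1 - 4/(k+1)^2`. -/
theorem stmt11 (k : ℕ) (hk : Odd k) (hk0 : 0 < k) :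
    (1 - 4 / ((k : ℝ) + 1) ^ 2) ≤
      Filter.atTop.liminf (fun n : ℕ => (fmax n k : ℝ) / (n.choose 3 : ℝ)) := by
  
  obtain ⟨a, ha⟩ := hk
  set t := a + 1 with htdef
  have hkt : k = 2 * t - 1 := by omega
  have ht : 1 ≤ t := by omega
  have hg := tendsto_g t ht
  have hev : ∀ᶠ (n : ℕ) in Filter.atTop,
      1 - (1/(t:ℝ)^2) * (((n:ℝ)+(t:ℝ))/((n:ℝ)-2))^3 ≤ (fmax n k : ℝ) / (n.choose 3 : ℝ) := by
    filter_upwards [Filter.eventually_ge_atTop 3] with n hn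
    exact ev_ineq k t n hkt ht hn
  have hbdd : Filter.IsBoundedUnder (· ≥ ·) Filter.atTop
      (fun n : ℕ => 1 - (1/(t:ℝ)^2) * (((n:ℝ)+(t:ℝ))/((n:ℝ)-2))^3) :=
    hg.isBoundedUnder_ge
  have hcb : Filter.IsCoboundedUnder (· ≥ ·) Filter.atTop
      (fun n : ℕ => (fmax n k : ℝ) / (n.choose 3 : ℝ)) := by
    apply Filter.isCoboundedUnder_ge_of_eventually_le Filter.atTop (x := 1)
    filter_upwards [Filter.eventually_ge_atTop 3] with n hn
    have hA0 : (0:ℝ) < (n.choose 3 : ℝ) := by exact_mod_cast Nat.choose_pos hn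
    rw [div_le_one hA0]
    exact_mod_cast fmax_le n k hk0
  have hln := Filter.liminf_le_liminf hev hbdd hcb
  rw [hg.liminf_eq] at hln
  have heq : 1 - 4 / ((k : ℝ) + 1) ^ 2 = 1 - 1/(t:ℝ)^2 := by
    have h2 : (k:ℝ) + 1 = 2 * (t:ℝ) := by
      have : (k + 1 : ℕ) = 2 * t := by omega
      exact_mod_cast this
    rw [h2]
    have hT0 : (t:ℝ) ≠ 0 := by positivity
    field_simp
    ring
  rw [heq]
  exact hln
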